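/- Let R be a commutative ring and f ∈ R((t)) an idempotent (f² = f) whose image in R_red((t)) is 0, where R_red = R/nilradical. Then f = 0. -/

import Mathlib

private theorem aux_order_nonpos {R : Type u} [CommRing R] {f : LaurentSeries R}
    (hf : f * f = f) (hne : f ≠ 0) : f.order ≤ 0 := by
  have h1 : f.orderTop + f.orderTop ≤ (f * f).orderTop :=
    HahnSeries.orderTop_add_le_mul
  rw [hf, ← HahnSeries.order_eq_orderTop_of_ne_zero hne, ← WithTop.coe_add,
    WithTop.coe_le_coe] at h1
  omega

private theorem aux_sq {R : Type u} [CommRing R] {f : LaurentSeries R} (hne : f ≠ 0) :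
    (f * f).coeff (f.order + f.order) = f.coeff f.order * f.coeff f.order := by
  have := HahnSeries.coeff_mul_order_add_order f f
  rwa [HahnSeries.leadingCoeff_eq] at this

private theorem aux_idem_nilp {R : Type u} [CommRing R] {a : R}
    (h1 : a * a = a) (h2 : IsNilpotent a) : a = 0 := by
  obtain ⟨m, hm⟩ := h2
  have hpow : ∀ j : ℕ, a ^ (j + 1) = a := by
    intro j
    induction j with
    | zero => simp
    | succ j ih => rw [pow_succ, ih, h1]
  calc a = a ^ (m + 1) := (hpow m).symm
    _ = a ^ m * a := pow_succ _ _
    _ = 0 := by rw [hm, zero_mul]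

private theorem aux_key (k : ℕ) : ∀ (R : Type u) [CommRing R] (f : LaurentSeries R),
    f * f = f → (∀ n : ℤ, f.coeff n ∈ nilradical R) →
    (∀ n : ℤ, n < -(k : ℤ) → f.coeff n = 0) → f = 0 := by
  induction k with
  | zero =>
    intro R _ f hf hnil hlow
    by_contra hne
    have hcoeff : f.coeff f.order ≠ 0 := by
      rw [← HahnSeries.leadingCoeff_eq]; exact HahnSeries.leadingCoeff_ne_zero.mpr hne
    have hge : (0 : ℤ) ≤ f.order := by
      by_contra hlt
      exact hcoeff (hlow f.order (by push_cast; omega))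
    have hle := aux_order_nonpos hf hne
    have hn0 : f.order = 0 := le_antisymm hle hge
    have hlead : f.coeff f.order * f.coeff f.order = f.coeff f.order := by
      have := aux_sq hne
      rw [hf, hn0] at this
      simpa [hn0] using this.symm
    exact hcoeff (aux_idem_nilp hlead (mem_nilradical.mp (hnil f.order)))
  | succ k ih =>
    intro R _ f hf hnil hlow
    by_contra hne
    have hcoeff : f.coeff f.order ≠ 0 := by
      rw [← HahnSeries.leadingCoeff_eq]; exact HahnSeries.leadingCoeff_ne_zero.mpr hne
    have hnge : -((k : ℤ) + 1) ≤ f.order := by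
      by_contra hlt
      exact hcoeff (hlow f.order (by push_cast; omega))
    have hle := aux_order_nonpos hf hne
    rcases eq_or_lt_of_le hle with h0 | hneg
    · -- order = 0
      have hlead : f.coeff f.order * f.coeff f.order = f.coeff f.order := by
        have := aux_sq hne
        rw [hf, h0] at this
        simpa [h0] using this.symm
      exact hcoeff (aux_idem_nilp hlead (mem_nilradical.mp (hnil f.order)))
    · -- order < 0
      have ha2 : f.coeff f.order * f.coeff f.order = 0 := by
        rw [← aux_sq hne, hf]
        exact HahnSeries.coeff_eq_zero_of_lt_order (by omega)
      set I : Ideal R := Ideal.span {f.coeff f.order} with hI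
      set π : R →ₙ+* R ⧸ I := (Ideal.Quotient.mk I).toNonUnitalRingHom with hπ
      have hgc : ∀ m : ℤ, (f.map π).coeff m = Ideal.Quotient.mk I (f.coeff m) :=
        fun m => rfl
      have hgmul : f.map π * f.map π = f.map π := by
        rw [← HahnSeries.map_mul, hf]
      have hgnil : ∀ m : ℤ, (f.map π).coeff m ∈ nilradical (R ⧸ I) := by
        intro m
        obtain ⟨j, hj⟩ := mem_nilradical.mp (hnil m)
        exact mem_nilradical.mpr ⟨j, by rw [hgc, ← map_pow, hj, map_zero]⟩
      have hglow : ∀ m : ℤ, m < -(k : ℤ) → (f.map π).coeff m = 0 := by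
        intro m hm
        rcases lt_or_ge m f.order with hmn | hmn
        · rw [hgc, HahnSeries.coeff_eq_zero_of_lt_order hmn, map_zero]
        · have hmn' : m = f.order := by omega
          rw [hgc, hmn']
          exact Ideal.Quotient.eq_zero_iff_mem.mpr (Ideal.subset_span rfl)
      have hg0 : f.map π = 0 := ih (R ⧸ I) (f.map π) hgmul hgnil hglow
      have hmem : ∀ m : ℤ, f.coeff m ∈ I := by
        intro m
        have : (f.map π).coeff m = 0 := by rw [hg0]; rfl
        rw [hgc] at this
        exact Ideal.Quotient.eq_zero_iff_mem.mp this
      apply hcoeff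
      rw [← hf, HahnSeries.coeff_mul]
      apply Finset.sum_eq_zero
      intro ij _
      obtain ⟨r, hr⟩ := Ideal.mem_span_singleton'.mp (hmem ij.1)
      obtain ⟨s, hs⟩ := Ideal.mem_span_singleton'.mp (hmem ij.2)
      rw [← hr, ← hs, show r * f.coeff f.order * (s * f.coeff f.order)
        = r * s * (f.coeff f.order * f.coeff f.order) by ring, ha2, mul_zero]

/-- **An idempotent Laurent series which reduces to `0` modulo the nilradical is `0`.**
Let `R` be a commutative ring and `f ∈ R((t))` with `f² = f` and such that the image of `f`
in `R_red((t))` is `0`, i.e. every coefficient of `f` lies in the nilradical of `R`.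
Then `f = 0`. -/
theorem idempotent_laurentSeries_eq_zero_of_coeff_nilpotent
    (R : Type*) [CommRing R] (f : LaurentSeries R) (hf : f * f = f)
    (h : ∀ n : ℤ, f.coeff n ∈ nilradical R) :
    f = 0 := by
  apply aux_key f.order.natAbs R f hf h
  intro n hn
  apply HahnSeries.coeff_eq_zero_of_lt_order
  omega
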